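/- Given X ∈ ℝ^{n×k} with XᵀAX = J and Z with ZᵀAX + XᵀAZ = 0, set W₀ = XᵀAZ, V₀ = ZᵀAZ, and Ψ = [[JW₀, −JV₀],[I_k, JW₀]] ∈ ℝ^{2k×2k}. Then the curve Y(t) = [X, Z]·exp(tΨ)·[I_k; 0]·exp(−tJW₀) satisfies Y(t)ᵀ A Y(t) = J for all t ∈ ℝ. -/

import Mathlib

open Matrix

noncomputable section

/-- If `A * B = B * C` then `exp A * B = B * exp C`. -/
lemma aux_exp_mul_eq_mul_exp {m : Type*} [Fintype m] [DecidableEq m]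
    (A B C : Matrix m m ℝ) (h : A * B = B * C) :
    NormedSpace.exp A * B = B * NormedSpace.exp C := by
  letI : SeminormedRing (Matrix m m ℝ) := Matrix.linftyOpSemiNormedRing
  letI : NormedRing (Matrix m m ℝ) := Matrix.linftyOpNormedRing
  letI : NormedAlgebra ℝ (Matrix m m ℝ) := Matrix.linftyOpNormedAlgebra
  have hpow : ∀ n : ℕ, A ^ n * B = B * C ^ n := by
    intro n
    induction n with
    | zero => simp
    | succ n ih =>
      rw [pow_succ, pow_succ, Matrix.mul_assoc, h, ← Matrix.mul_assoc, ih, Matrix.mul_assoc]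
  rw [NormedSpace.exp_eq_tsum ℝ]
  beta_reduce
  calc (∑' (n : ℕ), ((Nat.factorial n : ℝ))⁻¹ • A ^ n) * B
      = ∑' (n : ℕ), ((Nat.factorial n : ℝ))⁻¹ • A ^ n * B :=
        ((NormedSpace.expSeries_summable' (𝕂 := ℝ) A).tsum_mul_right B).symm
    _ = ∑' (n : ℕ), B * (((Nat.factorial n : ℝ))⁻¹ • C ^ n) := by
        refine tsum_congr fun n => ?_
        rw [smul_mul_assoc, hpow n, mul_smul_comm]
    _ = B * ∑' (n : ℕ), ((Nat.factorial n : ℝ))⁻¹ • C ^ n :=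
        (NormedSpace.expSeries_summable' (𝕂 := ℝ) C).tsum_mul_left B

lemma aux_exp_sandwich {m : Type*} [Fintype m] [DecidableEq m]
    (P M : Matrix m m ℝ) (h : Pᵀ * M = M * (-P)) :
    (NormedSpace.exp P)ᵀ * M * NormedSpace.exp P = M := by
  rw [← Matrix.exp_transpose, aux_exp_mul_eq_mul_exp _ _ _ h, Matrix.mul_assoc,
    ← Matrix.exp_add_of_commute (-P) P ((Commute.refl P).neg_left), neg_add_cancel,
    NormedSpace.exp_zero, Matrix.mul_one]

lemma aux_conj_assoc {a b c : Type*} [Fintype a] [Fintype b] [Fintype c]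
    (A : Matrix a b ℝ) (B : Matrix b c ℝ) (C : Matrix a a ℝ) :
    (A * B)ᵀ * C * (A * B) = Bᵀ * (Aᵀ * C * A) * B := by
  rw [Matrix.transpose_mul]
  simp only [Matrix.mul_assoc]

theorem stmt_16 {n k : ℕ} (A : Matrix (Fin n) (Fin n) ℝ) (J : Matrix (Fin k) (Fin k) ℝ)
    (hA : Aᵀ = A) (hAinv : IsUnit A.det) (hJ : Jᵀ = J) (hJ2 : J * J = 1)
    (X : Matrix (Fin n) (Fin k) ℝ) (hX : Xᵀ * A * X = J)
    (Z : Matrix (Fin n) (Fin k) ℝ) (hZ : Zᵀ * A * X + Xᵀ * A * Z = 0)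
    (W₀ V₀ : Matrix (Fin k) (Fin k) ℝ) (hW₀ : W₀ = Xᵀ * A * Z) (hV₀ : V₀ = Zᵀ * A * Z)
    (Ψ : Matrix (Fin k ⊕ Fin k) (Fin k ⊕ Fin k) ℝ)
    (hΨ : Ψ = fromBlocks (J * W₀) (-(J * V₀)) 1 (J * W₀))
    (Y : ℝ → Matrix (Fin n) (Fin k) ℝ)
    (hY : Y = fun t => fromCols X Z * NormedSpace.exp (t • Ψ) *
        fromRows (1 : Matrix (Fin k) (Fin k) ℝ) (0 : Matrix (Fin k) (Fin k) ℝ) * NormedSpace.exp (-(t • (J * W₀)))) :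
    ∀ t : ℝ, (Y t)ᵀ * A * Y t = J := by
  intro t
  have hZAX : Zᵀ * A * X = -W₀ := by rw [hW₀]; exact eq_neg_of_add_eq_zero_left hZ
  have hW₀T : W₀ᵀ = -W₀ := by
    rw [hW₀, Matrix.transpose_mul, Matrix.transpose_mul, transpose_transpose, hA,
      ← Matrix.mul_assoc, hZAX, ← hW₀]
  have hV₀T : V₀ᵀ = V₀ := by
    rw [hV₀, Matrix.transpose_mul, Matrix.transpose_mul, transpose_transpose, hA,
      ← Matrix.mul_assoc]
  have hJJ : ∀ B : Matrix (Fin k) (Fin k) ℝ, J * (J * B) = B := fun B => by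
    rw [← Matrix.mul_assoc, hJ2, Matrix.one_mul]
  set M : Matrix (Fin k ⊕ Fin k) (Fin k ⊕ Fin k) ℝ := fromBlocks J W₀ (-W₀) V₀ with hM
  -- CᵀAC = M
  have hCAC : (fromCols X Z)ᵀ * A * fromCols X Z = M := by
    rw [transpose_fromCols, fromRows_mul, fromRows_mul_fromCols, hX, ← hW₀, hZAX, ← hV₀]
  -- Ψᵀ M = M (-Ψ)
  have hΨM : Ψᵀ * M = M * (-Ψ) := by
    rw [hΨ, hM]
    simp only [fromBlocks_transpose, transpose_neg, Matrix.transpose_mul, transpose_one, hJ,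
      hW₀T, hV₀T, fromBlocks_neg, fromBlocks_multiply]
    rw [fromBlocks_inj]
    refine ⟨?_, ?_, ?_, ?_⟩ <;>
      simp only [Matrix.mul_assoc, hJ2, hJJ, Matrix.neg_mul, Matrix.mul_neg, neg_neg,
        Matrix.one_mul, Matrix.mul_one] <;>
      abel
  have hΨM' : (t • Ψ)ᵀ * M = M * (-(t • Ψ)) := by
    simp only [transpose_smul, smul_mul_assoc, hΨM, Matrix.mul_neg, mul_smul_comm, smul_neg]
  have hE : (NormedSpace.exp (t • Ψ))ᵀ * M * NormedSpace.exp (t • Ψ) = M :=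
    aux_exp_sandwich _ _ hΨM'
  -- Rᵀ M R = J
  have hR : (fromRows (1 : Matrix (Fin k) (Fin k) ℝ) (0 : Matrix (Fin k) (Fin k) ℝ))ᵀ * M *
      fromRows (1 : Matrix (Fin k) (Fin k) ℝ) (0 : Matrix (Fin k) (Fin k) ℝ) = J := by
    rw [transpose_fromRows, hM, fromCols_mul_fromBlocks, transpose_one, transpose_zero,
      fromCols_mul_fromRows]
    simp
  -- Fᵀ J F = J
  have hF : (NormedSpace.exp (-(t • (J * W₀))))ᵀ * J *
      NormedSpace.exp (-(t • (J * W₀))) = J := by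
    refine aux_exp_sandwich _ _ ?_
    rw [transpose_neg, transpose_smul, Matrix.transpose_mul, hJ, hW₀T]
    simp only [Matrix.neg_mul, smul_neg, neg_neg, smul_mul_assoc, mul_smul_comm,
      Matrix.mul_assoc, hJ2, hJJ, Matrix.mul_one]
  -- assemble
  simp only [hY]
  rw [aux_conj_assoc, aux_conj_assoc, aux_conj_assoc, hCAC, hE, hR, hF]

end
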